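/- arXiv:2112.01663 — 2 statements merged into one kernel-verified Lean document; each statement's English description precedes it below -/
import Mathlib

section
/- Let n ≥ 2 and T > 0. Let B : [0,T] → ℝ^{n×n} be continuous with B(t) null negative-definite for every t ∈ [0,T]. Let L : [0,T] → ℝ^{n×n} be a smooth (at least C³) family of Minkowski-symmetric matrices satisfying the Riccati equation t L′(t) + L(t)² − L(t) + t² B(t) = 0 for all t ∈ (0,T], with initial condition L(0) = id (the identity matrix). Then −L(t) is null negative-definite for every t ∈ (0,T]; equivalently, ⟨L(t)v, v⟩ > 0 for every t ∈ (0,T] and every nonzero null vector v ∈ ℝⁿ. -/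
open Matrix Set Filter Topology


open Matrix Set

noncomputable section

/-- The Minkowski inner product on `ℝⁿ`: `⟨v,w⟩ = -v₀w₀ + Σ_{j≥1} vⱼwⱼ`. -/
def mink {n : ℕ} (v w : Fin n → ℝ) : ℝ :=
  ∑ j : Fin n, (if (j : ℕ) = 0 then -(v j * w j) else v j * w j)

/-- A vector is null if its Minkowski square vanishes. -/
def IsNull {n : ℕ} (v : Fin n → ℝ) : Prop := mink v v = 0

/-- A matrix is symmetric with respect to the Minkowski inner product. -/
def MinkSymm {n : ℕ} (L : Matrix (Fin n) (Fin n) ℝ) : Prop :=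
  ∀ v w : Fin n → ℝ, mink (L.mulVec v) w = mink v (L.mulVec w)

/-- A matrix is null negative-definite: `⟨Lv,v⟩ < 0` for all nonzero null `v`. -/
def NullNegDef {n : ℕ} (L : Matrix (Fin n) (Fin n) ℝ) : Prop :=
  ∀ v : Fin n → ℝ, v ≠ 0 → IsNull v → mink (L.mulVec v) v < 0

/-- A matrix is null negative semi-definite: `⟨Lv,v⟩ ≤ 0` for all null `v`. -/
def NullNegSemi {n : ℕ} (L : Matrix (Fin n) (Fin n) ℝ) : Prop :=
  ∀ v : Fin n → ℝ, IsNull v → mink (L.mulVec v) v ≤ 0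

/-- Entrywise derivative (within a set) of a matrix-valued function of a real variable. -/
def matDerivWithin {n : ℕ} (L : ℝ → Matrix (Fin n) (Fin n) ℝ) (s : Set ℝ) (t : ℝ) :
    Matrix (Fin n) (Fin n) ℝ :=
  Matrix.of fun i j => derivWithin (fun u => L u i j) s t

def minkSign {n : ℕ} (j : Fin n) : ℝ := if (j : ℕ) = 0 then -1 else 1

lemma mink_eq {n : ℕ} (v w : Fin n → ℝ) :
    mink v w = ∑ j : Fin n, minkSign j * (v j * w j) := by
  unfold mink minkSign
  refine Finset.sum_congr rfl fun j _ => ?_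
  split_ifs <;> ring

lemma mink_comm {n : ℕ} (v w : Fin n → ℝ) : mink v w = mink w v := by
  rw [mink_eq, mink_eq]
  exact Finset.sum_congr rfl fun j _ => by ring

lemma mink_mulVec_sum {n : ℕ} (M : Matrix (Fin n) (Fin n) ℝ) (x : Fin n → ℝ) :
    mink (M.mulVec x) x = ∑ i, minkSign i * ((∑ j, M i j * x j) * x i) := by
  rw [mink_eq]
  exact Finset.sum_congr rfl fun i _ => rfl

lemma mink_mulVec_sum2 {n : ℕ} (M : Matrix (Fin n) (Fin n) ℝ) (x y : Fin n → ℝ) :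
    mink (M.mulVec x) y = ∑ i, minkSign i * ((∑ j, M i j * x j) * y i) := by
  rw [mink_eq]
  exact Finset.sum_congr rfl fun i _ => rfl

lemma mink_smul_smul {n : ℕ} (c : ℝ) (x y : Fin n → ℝ) :
    mink (c • x) (c • y) = c^2 * mink x y := by
  rw [mink_eq, mink_eq, Finset.mul_sum]
  exact Finset.sum_congr rfl fun j _ => by
    simp [Pi.smul_apply, smul_eq_mul]; ring

lemma mink_sub_one {n : ℕ} (M : Matrix (Fin n) (Fin n) ℝ) (x : Fin n → ℝ) :
    mink ((M - 1).mulVec x) x = mink (M.mulVec x) x - mink x x := by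
  rw [Matrix.sub_mulVec, Matrix.one_mulVec, mink_eq, mink_eq, mink_eq, ← Finset.sum_sub_distrib]
  exact Finset.sum_congr rfl fun j _ => by
    simp only [Pi.sub_apply]; ring

lemma mink_split' {n : ℕ} (i0 : Fin n) (hi0 : (i0 : ℕ) = 0) (v w : Fin n → ℝ) :
    mink v w = -(v i0 * w i0) + ∑ j ∈ Finset.univ.erase i0, v j * w j := by
  unfold mink
  rw [show (∑ j : Fin n, if ((j:ℕ) = 0) then -(v j * w j) else v j * w j)
      = (if ((i0:ℕ)=0) then -(v i0 * w i0) else v i0 * w i0)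
        + ∑ j ∈ Finset.univ.erase i0, (if ((j:ℕ) = 0) then -(v j * w j) else v j * w j)
      from (Finset.add_sum_erase _ _ (Finset.mem_univ i0)).symm]
  have hhead : (if ((i0:ℕ)=0) then -(v i0 * w i0) else v i0 * w i0) = -(v i0 * w i0) :=
    if_pos hi0
  have htail : ∑ j ∈ Finset.univ.erase i0, (if ((j:ℕ) = 0) then -(v j * w j) else v j * w j)
      = ∑ j ∈ Finset.univ.erase i0, v j * w j := by
    refine Finset.sum_congr rfl fun j hj => ?_
    have hj0 : j ≠ i0 := Finset.ne_of_mem_erase hj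
    have : (j : ℕ) ≠ 0 := fun h => hj0 (Fin.ext (h.trans hi0.symm))
    simp [this]
  rw [hhead, htail]

lemma null_i0_ne {n : ℕ} (i0 : Fin n) (hi0 : (i0 : ℕ) = 0) {v : Fin n → ℝ}
    (hv0 : v ≠ 0) (hv : mink v v = 0) : v i0 ≠ 0 := by
  intro h0
  apply hv0
  rw [mink_split' i0 hi0] at hv
  funext j
  by_cases hj : j = i0
  · rw [hj, h0]; rfl
  · have hjE : j ∈ Finset.univ.erase i0 := Finset.mem_erase.2 ⟨hj, Finset.mem_univ j⟩
    have hnn : ∀ i ∈ Finset.univ.erase i0, 0 ≤ v i * v i := fun i _ => mul_self_nonneg _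
    have hz : ∑ j ∈ Finset.univ.erase i0, v j * v j = 0 := by
      rw [h0] at hv; linarith
    have := (Finset.sum_eq_zero_iff_of_nonneg hnn).1 hz j hjE
    have : v j = 0 := by nlinarith [this]
    simpa using this

lemma abs_minkSign {n : ℕ} (j : Fin n) : |minkSign j| = 1 := by
  unfold minkSign; split_ifs <;> simp

lemma slope_lim {T : ℝ} (hT : 0 < T) {f : ℝ → ℝ} {d : ℝ}
    (hf : HasDerivWithinAt f d (Set.Icc 0 T) 0) (hf0 : f 0 = 0) :
    Filter.Tendsto (fun t => f t / t) (𝓝[>] (0:ℝ)) (𝓝 d) := by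
  have h1 : HasDerivWithinAt f d (Set.Ioc 0 T) 0 := hf.mono Set.Ioc_subset_Icc_self
  have h2 := hasDerivWithinAt_iff_tendsto_slope.1 h1
  rw [Set.diff_singleton_eq_self (by simp)] at h2
  rw [nhdsWithin_Ioc_eq_nhdsGT hT] at h2
  refine h2.congr fun t => ?_
  simp [slope_def_field, hf0]

lemma cont_lim {T : ℝ} (hT : 0 < T) {f : ℝ → ℝ}
    (hf : ContinuousOn f (Set.Icc 0 T)) :
    Filter.Tendsto f (𝓝[>] (0:ℝ)) (𝓝 (f 0)) := by
  have h1 : ContinuousWithinAt f (Set.Ioc 0 T) 0 :=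
    (hf 0 ⟨le_refl 0, hT.le⟩).mono Set.Ioc_subset_Icc_self
  have h2 : Filter.Tendsto f (𝓝[Set.Ioc 0 T] (0:ℝ)) (𝓝 (f 0)) := h1
  rwa [nhdsWithin_Ioc_eq_nhdsGT hT] at h2

lemma sq_lhopital {T : ℝ} (hT : 0 < T) {f f' : ℝ → ℝ} {d : ℝ}
    (hf : ∀ x ∈ Set.Icc 0 T, HasDerivWithinAt f (f' x) (Set.Icc 0 T) x)
    (hf0 : f 0 = 0)
    (hcont : ContinuousOn f (Set.Icc 0 T))
    (hf'0 : f' 0 = 0)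
    (hf' : HasDerivWithinAt f' d (Set.Icc 0 T) 0) :
    Filter.Tendsto (fun t => f t / t^2) (𝓝[>] (0:ℝ)) (𝓝 (d/2)) := by
  have hff' : ∀ x ∈ Set.Ioo 0 T, HasDerivAt f (f' x) x := fun x hx =>
    (hf x (Set.Ioo_subset_Icc_self hx)).hasDerivAt (Icc_mem_nhds hx.1 hx.2)
  have hgg' : ∀ x ∈ Set.Ioo 0 T, HasDerivAt (fun y : ℝ => y^2) (2*x) x := by
    intro x _
    have := hasDerivAt_pow 2 x
    norm_num at this
    exact this
  have hg'ne : ∀ x ∈ Set.Ioo (0:ℝ) T, (2:ℝ)*x ≠ 0 := fun x hx => by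
    have := hx.1; positivity
  have hfa : Filter.Tendsto f (𝓝[>] (0:ℝ)) (𝓝 0) := by
    simpa [hf0] using cont_lim hT hcont
  have hga : Filter.Tendsto (fun y : ℝ => y^2) (𝓝[>] (0:ℝ)) (𝓝 0) := by
    have h : Filter.Tendsto (fun y : ℝ => y^2) (𝓝 (0:ℝ)) (𝓝 0) := by
      simpa using (continuous_pow 2).tendsto (0:ℝ)
    exact h.mono_left nhdsWithin_le_nhds
  have hdiv : Filter.Tendsto (fun x => f' x / (2*x)) (𝓝[>] (0:ℝ)) (𝓝 (d/2)) := by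
    have h := (slope_lim hT hf' hf'0).div_const 2
    refine h.congr fun x => ?_
    rw [div_div, mul_comm]
  exact HasDerivAt.lhopital_zero_right_on_Ioo hT hff' hgg' hg'ne hfa hga hdiv

lemma taylor_aux {n : ℕ} (T : ℝ) (hT : 0 < T)
    (B L : ℝ → Matrix (Fin n) (Fin n) ℝ)
    (hBcont : ∀ i j, ContinuousOn (fun t => B t i j) (Set.Icc 0 T))
    (hLsmooth : ∀ i j, ContDiffOn ℝ 3 (fun t => L t i j) (Set.Icc 0 T))
    (hL0 : L 0 = 1)
    (hRic : ∀ t ∈ Set.Ioc (0 : ℝ) T,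
      t • matDerivWithin L (Set.Icc 0 T) t + L t * L t - L t + t ^ 2 • B t = 0) :
    matDerivWithin L (Set.Icc 0 T) 0 = 0 ∧
    matDerivWithin (fun t => matDerivWithin L (Set.Icc 0 T) t) (Set.Icc 0 T) 0
      = (-(2/3) : ℝ) • B 0 := by
  set s : Set ℝ := Set.Icc 0 T with hs
  have hsU : UniqueDiffOn ℝ s := uniqueDiffOn_Icc hT
  have h0s : (0:ℝ) ∈ s := ⟨le_refl 0, hT.le⟩
  set L1 : ℝ → Matrix (Fin n) (Fin n) ℝ := fun t => matDerivWithin L s t with hL1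
  set L2 : ℝ → Matrix (Fin n) (Fin n) ℝ := fun t => matDerivWithin L1 s t with hL2
  have KEY : ∀ u : Fin n → ℝ, (∀ j, ((L1 0).mulVec u) j = 0) ∧
      (∀ j, ((L2 0).mulVec u) j = -(2/3) * ((B 0).mulVec u) j) := by
    intro u
    have hC1 : ∀ i j, ContDiffOn ℝ 2 (fun r => L1 r i j) s := fun i j =>
      (hLsmooth i j).derivWithin hsU (by norm_num)
    have hD1 : ∀ i j, ∀ t ∈ s, HasDerivWithinAt (fun r => L r i j) (L1 t i j) s t := fun i j t ht =>
      (((hLsmooth i j).differentiableOn (by norm_num)) t ht).hasDerivWithinAt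
    have hD2 : ∀ i j, ∀ t ∈ s, HasDerivWithinAt (fun r => L1 r i j) (L2 t i j) s t := fun i j t ht =>
      (((hC1 i j).differentiableOn (by norm_num)) t ht).hasDerivWithinAt
    have hcL : ∀ i j, ContinuousOn (fun r => L r i j) s := fun i j => (hLsmooth i j).continuousOn
    have hcL1 : ∀ i j, ContinuousOn (fun r => L1 r i j) s := fun i j => (hC1 i j).continuousOn
    set w : Fin n → ℝ → ℝ := fun j t => ((L t).mulVec u) j with hwdef
    set w1 : Fin n → ℝ → ℝ := fun j t => ((L1 t).mulVec u) j with hw1def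
    set w2 : Fin n → ℝ → ℝ := fun j t => ((L2 t).mulVec u) j with hw2def
    have hw_sum : ∀ j t, w j t = ∑ k, L t j k * u k := fun j t => rfl
    have hw1_sum : ∀ j t, w1 j t = ∑ k, L1 t j k * u k := fun j t => rfl
    have hw2_sum : ∀ j t, w2 j t = ∑ k, L2 t j k * u k := fun j t => rfl
    have sum_one : ∀ (x : Fin n → ℝ) (j : Fin n),
        ∑ k, (1 : Matrix (Fin n) (Fin n) ℝ) j k * x k = x j := by
      intro x j
      simpa [Matrix.mulVec, dotProduct] using congrFun (Matrix.one_mulVec x) j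
    have hw0 : ∀ j, w j 0 = u j := by
      intro j; rw [hw_sum, hL0]; exact sum_one u j
    have hw' : ∀ j, ∀ t ∈ s, HasDerivWithinAt (w j) (w1 j t) s t := by
      intro j t ht
      have h : HasDerivWithinAt (fun r => ∑ k, L r j k * u k) (∑ k, L1 t j k * u k) s t :=
        HasDerivWithinAt.fun_sum (fun k _ => (hD1 j k t ht).mul_const (u k))
      exact h
    have hw1' : ∀ j, ∀ t ∈ s, HasDerivWithinAt (w1 j) (w2 j t) s t := by
      intro j t ht
      have h : HasDerivWithinAt (fun r => ∑ k, L1 r j k * u k) (∑ k, L2 t j k * u k) s t :=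
        HasDerivWithinAt.fun_sum (fun k _ => (hD2 j k t ht).mul_const (u k))
      exact h
    have hwc : ∀ j, ContinuousOn (w j) s := by
      intro j
      have : ContinuousOn (fun r => ∑ k, L r j k * u k) s :=
        continuousOn_finset_sum _ (fun k _ => (hcL j k).mul continuousOn_const)
      exact this
    have hw1c : ∀ j, ContinuousOn (w1 j) s := by
      intro j
      have : ContinuousOn (fun r => ∑ k, L1 r j k * u k) s :=
        continuousOn_finset_sum _ (fun k _ => (hcL1 j k).mul continuousOn_const)
      exact this
    have hBvc : ∀ j, ContinuousOn (fun t => ((B t).mulVec u) j) s := by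
      intro j
      have : ContinuousOn (fun r => ∑ k, B r j k * u k) s :=
        continuousOn_finset_sum _ (fun k _ => (hBcont j k).mul continuousOn_const)
      exact this
    -- ODE componentwise
    have hODE : ∀ t ∈ Set.Ioc (0:ℝ) T, ∀ j,
        t * w1 j t + (∑ k, L t j k * w k t) - w j t + t^2 * ((B t).mulVec u) j = 0 := by
      intro t ht j
      have h := hRic t ht
      have h2 : (t • L1 t + L t * L t - L t + t ^ 2 • B t).mulVec u j
          = ((0:Matrix (Fin n) (Fin n) ℝ)).mulVec u j := by
        rw [show t • L1 t + L t * L t - L t + t ^ 2 • B t = 0 from h]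
      rw [Matrix.add_mulVec, Matrix.sub_mulVec, Matrix.add_mulVec, Matrix.smul_mulVec,
        Matrix.smul_mulVec, Matrix.zero_mulVec, ← Matrix.mulVec_mulVec] at h2
      simp only [Pi.add_apply, Pi.sub_apply, Pi.smul_apply, smul_eq_mul, Pi.zero_apply,
        Matrix.mulVec, dotProduct] at h2
      simp only [hw_sum, hw1_sum, Matrix.mulVec, dotProduct]
      linarith [h2]
    -- the auxiliary function g j = w j - (L w)_j
    set g : Fin n → ℝ → ℝ := fun j t => w j t - ∑ k, L t j k * w k t with hgdef
    set g1 : Fin n → ℝ → ℝ :=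
      fun j t => w1 j t - ∑ k, (L1 t j k * w k t + L t j k * w1 k t) with hg1def
    have hg0 : ∀ j, g j 0 = 0 := by
      intro j
      have : ∑ k, L 0 j k * w k 0 = u j := by
        rw [hL0]
        rw [show (∑ k, (1:Matrix (Fin n) (Fin n) ℝ) j k * w k 0) = ∑ k, (1:Matrix (Fin n) (Fin n) ℝ) j k * u k
          from Finset.sum_congr rfl fun k _ => by rw [hw0]]
        exact sum_one u j
      have h2 : g j 0 = w j 0 - ∑ k, L 0 j k * w k 0 := rfl
      rw [h2, this, hw0, sub_self]
    have hg' : ∀ j, ∀ t ∈ s, HasDerivWithinAt (g j) (g1 j t) s t := by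
      intro j t ht
      exact ((hw' j t ht).sub
        (HasDerivWithinAt.fun_sum (fun k _ => (hD1 j k t ht).mul (hw' k t ht))))
    have hgc : ∀ j, ContinuousOn (g j) s := by
      intro j
      exact (hwc j).sub (continuousOn_finset_sum _ (fun k _ => (hcL j k).mul (hwc k)))
    -- rearranged ODE
    have hODE' : ∀ t ∈ Set.Ioc (0:ℝ) T, ∀ j,
        w1 j t = g j t / t - t * ((B t).mulVec u) j := by
      intro t ht j
      have h := hODE t ht j
      have htne : t ≠ 0 := ne_of_gt ht.1
      have hgt : g j t = t * w1 j t + t^2 * ((B t).mulVec u) j := by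
        have h3 : g j t = w j t - ∑ k, L t j k * w k t := rfl
        rw [h3]; nlinarith [h]
      rw [hgt]
      field_simp
      ring
    -- Step A : w1 j 0 = 0
    have hp0 : ∀ j, w1 j 0 = 0 := by
      intro j
      have hgd : HasDerivWithinAt (g j) (-(w1 j 0)) s 0 := by
        have h := hg' j 0 h0s
        have hval : g1 j 0 = -(w1 j 0) := by
          have h1 : ∑ k, (L1 0 j k * w k 0 + L 0 j k * w1 k 0)
              = w1 j 0 + w1 j 0 := by
            rw [Finset.sum_add_distrib]
            congr 1
            · rw [show (∑ k, L1 0 j k * w k 0) = ∑ k, L1 0 j k * u k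
                from Finset.sum_congr rfl fun k _ => by rw [hw0]]
              exact (hw1_sum j 0).symm
            · rw [hL0]; exact sum_one (fun k => w1 k 0) j
          simp only [hg1def, h1]; ring
        rw [← hval]; exact h
      have lim1 : Tendsto (fun t => g j t / t) (𝓝[>] (0:ℝ)) (𝓝 (-(w1 j 0))) :=
        slope_lim hT hgd (hg0 j)
      have limB : Tendsto (fun t => t * ((B t).mulVec u) j) (𝓝[>] (0:ℝ))
          (𝓝 (0 * ((B 0).mulVec u) j)) :=
        (tendsto_id.mono_left nhdsWithin_le_nhds).mul (cont_lim hT (hBvc j))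
      have lim3 : Tendsto (fun t => g j t / t - t * ((B t).mulVec u) j) (𝓝[>] (0:ℝ))
          (𝓝 (-(w1 j 0) - 0 * ((B 0).mulVec u) j)) := lim1.sub limB
      have lim2 : Tendsto (fun t => w1 j t) (𝓝[>] (0:ℝ)) (𝓝 (w1 j 0)) := cont_lim hT (hw1c j)
      have lim2' : Tendsto (fun t => g j t / t - t * ((B t).mulVec u) j) (𝓝[>] (0:ℝ))
          (𝓝 (w1 j 0)) := by
        refine lim2.congr' ?_
        filter_upwards [Ioc_mem_nhdsGT_of_mem (Set.left_mem_Ico.2 hT)] with t ht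
        exact hODE' t ht j
      have := tendsto_nhds_unique lim2' lim3
      linarith
    -- limits of w1 j t / t
    have limw1 : ∀ j, Tendsto (fun t => w1 j t / t) (𝓝[>] (0:ℝ)) (𝓝 (w2 j 0)) := fun j =>
      slope_lim hT (hw1' j 0 h0s) (hp0 j)
    have hg10 : ∀ j, g1 j 0 = 0 := by
      intro j
      have h2 : g1 j 0 = w1 j 0 - ∑ k, (L1 0 j k * w k 0 + L 0 j k * w1 k 0) := rfl
      have h1 : ∑ k, (L1 0 j k * w k 0 + L 0 j k * w1 k 0) = w1 j 0 + w1 j 0 := by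
        rw [Finset.sum_add_distrib]
        congr 1
        · rw [show (∑ k, L1 0 j k * w k 0) = ∑ k, L1 0 j k * u k
            from Finset.sum_congr rfl fun k _ => by rw [hw0]]
          exact (hw1_sum j 0).symm
        · rw [hL0]; exact sum_one (fun k => w1 k 0) j
      rw [h2, h1, hp0 j]; ring
    have hg1' : ∀ j, HasDerivWithinAt (g1 j) (-(w2 j 0)) s 0 := by
      intro j
      have h : HasDerivWithinAt (g1 j)
          (w2 j 0 - ∑ k, ((L2 0 j k * w k 0 + L1 0 j k * w1 k 0)
            + (L1 0 j k * w1 k 0 + L 0 j k * w2 k 0))) s 0 :=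
        (hw1' j 0 h0s).sub (HasDerivWithinAt.fun_sum fun k _ =>
          ((hD2 j k 0 h0s).mul (hw' k 0 h0s)).add ((hD1 j k 0 h0s).mul (hw1' k 0 h0s)))
      have e1 : ∑ k, L2 0 j k * w k 0 = w2 j 0 := by
        rw [show (∑ k, L2 0 j k * w k 0) = ∑ k, L2 0 j k * u k
          from Finset.sum_congr rfl fun k _ => by rw [hw0]]
        exact (hw2_sum j 0).symm
      have e2 : ∑ k, L1 0 j k * w1 k 0 = 0 :=
        Finset.sum_eq_zero fun k _ => by rw [hp0 k, mul_zero]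
      have e3 : ∑ k, L 0 j k * w2 k 0 = w2 j 0 := by
        rw [hL0]; exact sum_one (fun k => w2 k 0) j
      have hval : w2 j 0 - ∑ k, ((L2 0 j k * w k 0 + L1 0 j k * w1 k 0)
          + (L1 0 j k * w1 k 0 + L 0 j k * w2 k 0)) = -(w2 j 0) := by
        rw [Finset.sum_add_distrib, Finset.sum_add_distrib, Finset.sum_add_distrib, e1, e2, e3]
        ring
      rw [hval] at h
      exact h
    -- Step B : w2 j 0 = -(2/3) * (B 0 u) j
    have hA : ∀ j, w2 j 0 = -(2/3) * ((B 0).mulVec u) j := by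
      intro j
      have limg2 : Tendsto (fun t => g j t / t^2) (𝓝[>] (0:ℝ)) (𝓝 (-(w2 j 0)/2)) :=
        sq_lhopital hT (fun x hx => hg' j x hx) (hg0 j) (hgc j) (hg10 j) (hg1' j)
      have limRHS : Tendsto (fun t => g j t/t^2 - ((B t).mulVec u) j) (𝓝[>](0:ℝ))
          (𝓝 (-(w2 j 0)/2 - ((B 0).mulVec u) j)) := limg2.sub (cont_lim hT (hBvc j))
      have limLHS : Tendsto (fun t => g j t/t^2 - ((B t).mulVec u) j) (𝓝[>](0:ℝ))
          (𝓝 (w2 j 0)) := by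
        refine (limw1 j).congr' ?_
        filter_upwards [Ioc_mem_nhdsGT_of_mem (Set.left_mem_Ico.2 hT),
          self_mem_nhdsWithin] with t ht ht0
        rw [hODE' t ht j]
        have htne : (t:ℝ) ≠ 0 := ne_of_gt ht0
        field_simp
      have huniq := tendsto_nhds_unique limLHS limRHS
      linarith

    exact ⟨hp0, hA⟩
  constructor
  · ext i j
    have h := (KEY (Pi.single j 1)).1 i
    rw [Matrix.mulVec_single] at h
    simpa using h
  · ext i j
    have h := (KEY (Pi.single j 1)).2 i
    rw [Matrix.mulVec_single, Matrix.mulVec_single] at h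
    simpa using h

lemma barrier_aux {n : ℕ} (T : ℝ) (hT : 0 < T)
    (B L : ℝ → Matrix (Fin n) (Fin n) ℝ)
    (hLsmooth : ∀ i j, ContDiffOn ℝ 3 (fun t => L t i j) (Set.Icc 0 T))
    (hRic : ∀ t ∈ Set.Ioc (0 : ℝ) T,
      t • matDerivWithin L (Set.Icc 0 T) t + L t * L t - L t + t ^ 2 • B t = 0)
    (u : Fin n → ℝ) (t₀ : ℝ) (ht₀ : t₀ ∈ Set.Ioc (0:ℝ) T)
    (hF0 : mink ((L t₀).mulVec u) u = 0)
    (hQ : mink ((L t₀).mulVec ((L t₀).mulVec u)) u ≤ 0)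
    (hb : mink ((B t₀).mulVec u) u < 0)
    (hbefore : ∀ x ∈ Set.Ioo (0:ℝ) t₀, 0 ≤ mink ((L x).mulVec u) u) : False := by
  set s : Set ℝ := Set.Icc 0 T with hs
  have ht₀pos : 0 < t₀ := ht₀.1
  have ht₀T : t₀ ≤ T := ht₀.2
  have ht₀s : t₀ ∈ s := ⟨ht₀pos.le, ht₀T⟩
  set L1 : ℝ → Matrix (Fin n) (Fin n) ℝ := fun t => matDerivWithin L s t with hL1
  have hD1 : ∀ i j, ∀ t ∈ s, HasDerivWithinAt (fun r => L r i j) (L1 t i j) s t := fun i j t ht =>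
    (((hLsmooth i j).differentiableOn (by norm_num)) t ht).hasDerivWithinAt
  set w : Fin n → ℝ → ℝ := fun j t => ((L t).mulVec u) j with hwdef
  set w1 : Fin n → ℝ → ℝ := fun j t => ((L1 t).mulVec u) j with hw1def
  have hw_sum : ∀ j t, w j t = ∑ k, L t j k * u k := fun j t => rfl
  have hw1_sum : ∀ j t, w1 j t = ∑ k, L1 t j k * u k := fun j t => rfl
  have hw' : ∀ j, ∀ t ∈ s, HasDerivWithinAt (w j) (w1 j t) s t := by
    intro j t ht
    have h : HasDerivWithinAt (fun r => ∑ k, L r j k * u k) (∑ k, L1 t j k * u k) s t :=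
      HasDerivWithinAt.fun_sum (fun k _ => (hD1 j k t ht).mul_const (u k))
    exact h
  have hODE : ∀ j,
      t₀ * w1 j t₀ + (∑ k, L t₀ j k * w k t₀) - w j t₀ + t₀^2 * ((B t₀).mulVec u) j = 0 := by
    intro j
    have h := hRic t₀ ht₀
    have h2 : (t₀ • L1 t₀ + L t₀ * L t₀ - L t₀ + t₀ ^ 2 • B t₀).mulVec u j
        = ((0:Matrix (Fin n) (Fin n) ℝ)).mulVec u j := by
      rw [show t₀ • L1 t₀ + L t₀ * L t₀ - L t₀ + t₀ ^ 2 • B t₀ = 0 from h]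
    rw [Matrix.add_mulVec, Matrix.sub_mulVec, Matrix.add_mulVec, Matrix.smul_mulVec,
      Matrix.smul_mulVec, Matrix.zero_mulVec, ← Matrix.mulVec_mulVec] at h2
    simp only [Pi.add_apply, Pi.sub_apply, Pi.smul_apply, smul_eq_mul, Pi.zero_apply,
      Matrix.mulVec, dotProduct] at h2
    simp only [hw_sum, hw1_sum, Matrix.mulVec, dotProduct]
    linarith [h2]
  have hsum : ∑ j, minkSign j * u j * (t₀ * w1 j t₀ + (∑ k, L t₀ j k * w k t₀)
      - w j t₀ + t₀^2 * ((B t₀).mulVec u) j) = 0 :=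
    Finset.sum_eq_zero fun j _ => by rw [hODE j]; ring
  have hexp : ∑ j, minkSign j * u j * (t₀ * w1 j t₀ + (∑ k, L t₀ j k * w k t₀)
      - w j t₀ + t₀^2 * ((B t₀).mulVec u) j)
      = t₀ * (∑ j, minkSign j * (w1 j t₀ * u j))
        + (∑ j, minkSign j * ((((L t₀).mulVec ((L t₀).mulVec u)) j) * u j))
        - (∑ j, minkSign j * (w j t₀ * u j))
        + t₀^2 * (∑ j, minkSign j * ((((B t₀).mulVec u) j) * u j)) := by
    rw [Finset.mul_sum, Finset.mul_sum, ← Finset.sum_add_distrib, ← Finset.sum_sub_distrib,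
      ← Finset.sum_add_distrib]
    refine Finset.sum_congr rfl fun j _ => ?_
    rw [show (((L t₀).mulVec ((L t₀).mulVec u)) j) = ∑ k, L t₀ j k * w k t₀ from rfl]
    ring
  have h1 : ∑ j, minkSign j * ((((L t₀).mulVec ((L t₀).mulVec u)) j) * u j)
      = mink ((L t₀).mulVec ((L t₀).mulVec u)) u := (mink_eq _ _).symm
  have h3 : ∑ j, minkSign j * ((((B t₀).mulVec u) j) * u j) = mink ((B t₀).mulVec u) u :=
    (mink_eq _ _).symm
  have hFt₀' : ∑ j, minkSign j * (w j t₀ * u j) = 0 := by rw [← mink_eq]; exact hF0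
  rw [hexp, h1, h3, hFt₀'] at hsum
  have hF1pos : 0 < ∑ j, minkSign j * (w1 j t₀ * u j) := by
    have h4 : 0 < t₀ * (∑ j, minkSign j * (w1 j t₀ * u j)) := by
      have hb2 : t₀^2 * mink ((B t₀).mulVec u) u < 0 :=
        mul_neg_of_pos_of_neg (pow_pos ht₀pos 2) hb
      linarith [hsum, hQ, hb2]
    by_contra hcon3
    push_neg at hcon3
    nlinarith [h4, mul_nonpos_of_nonneg_of_nonpos ht₀pos.le hcon3]
  set F : ℝ → ℝ := fun t => ∑ j, minkSign j * (w j t * u j) with hFdef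
  have hF' : HasDerivWithinAt F (∑ j, minkSign j * (w1 j t₀ * u j)) s t₀ :=
    HasDerivWithinAt.fun_sum fun j _ => ((hw' j t₀ ht₀s).mul_const (u j)).const_mul (minkSign j)
  have hsubIoo : Set.Ioo (0:ℝ) t₀ ⊆ s := fun x hx => ⟨hx.1.le, le_trans hx.2.le ht₀T⟩
  have hm : (𝓝[Set.Ioo (0:ℝ) t₀] t₀).NeBot := by
    refine mem_closure_iff_nhdsWithin_neBot.1 ?_
    rw [closure_Ioo (ne_of_lt ht₀pos)]
    exact ⟨ht₀pos.le, le_refl t₀⟩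
  have hslope := hasDerivWithinAt_iff_tendsto_slope.1 hF'
  have hsub2 : Set.Ioo (0:ℝ) t₀ ⊆ s \ {t₀} := fun x hx =>
    ⟨hsubIoo hx, by simp [ne_of_lt hx.2]⟩
  have hslope2 : Tendsto (slope F t₀) (𝓝[Set.Ioo (0:ℝ) t₀] t₀)
      (𝓝 (∑ j, minkSign j * (w1 j t₀ * u j))) :=
    hslope.mono_left (nhdsWithin_mono t₀ hsub2)
  have hevslope : ∀ᶠ x in 𝓝[Set.Ioo (0:ℝ) t₀] t₀, 0 < slope F t₀ x :=
    hslope2.eventually (eventually_gt_nhds hF1pos)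
  obtain ⟨x, hxslope, hxIoo⟩ := (hevslope.and eventually_mem_nhdsWithin).exists
  have hFx : 0 ≤ F x := by
    have := hbefore x hxIoo
    rw [mink_eq] at this
    exact this
  have hxs : slope F t₀ x = F x / (x - t₀) := by
    rw [slope_def_field, show F t₀ = 0 from hFt₀', sub_zero]
  have hxlt : x - t₀ < 0 := sub_neg.2 hxIoo.2
  rw [hxs] at hxslope
  nlinarith [hxslope, hxlt, hFx, div_nonpos_of_nonneg_of_nonpos hFx hxlt.le]

set_option maxHeartbeats 2000000 in
/-- Riccati comparison: if `B(t)` is null negative-definite on `[0,T]`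
and the Minkowski-symmetric family `L` solves `t L' + L² - L + t² B = 0` on `(0,T]` with
`L(0) = id`, then `⟨L(t)v,v⟩ > 0` for all `t ∈ (0,T]` and all nonzero null `v`. -/
theorem stmt_3 {n : ℕ} (hn : 2 ≤ n) (T : ℝ) (hT : 0 < T)
    (B L : ℝ → Matrix (Fin n) (Fin n) ℝ)
    (hBcont : ∀ i j, ContinuousOn (fun t => B t i j) (Set.Icc 0 T))
    (hBdef : ∀ t ∈ Set.Icc (0 : ℝ) T, NullNegDef (B t))
    (hLsmooth : ∀ i j, ContDiffOn ℝ 3 (fun t => L t i j) (Set.Icc 0 T))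
    (hLsymm : ∀ t ∈ Set.Icc (0 : ℝ) T, MinkSymm (L t))
    (hL0 : L 0 = 1)
    (hRic : ∀ t ∈ Set.Ioc (0 : ℝ) T,
      t • matDerivWithin L (Set.Icc 0 T) t + L t * L t - L t + t ^ 2 • B t = 0) :
    ∀ t ∈ Set.Ioc (0 : ℝ) T, ∀ v : Fin n → ℝ, v ≠ 0 → IsNull v →
      0 < mink ((L t).mulVec v) v := by

  intro t₁ ht₁ v hv0 hvnull
  have h0s : (0:ℝ) ∈ Set.Icc (0:ℝ) T := ⟨le_refl 0, hT.le⟩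
  have hsU : UniqueDiffOn ℝ (Set.Icc (0:ℝ) T) := uniqueDiffOn_Icc hT
  set i0 : Fin n := ⟨0, by omega⟩ with hi0def
  have hi0 : (i0 : ℕ) = 0 := rfl
  have hcL : ∀ i j, ContinuousOn (fun r => L r i j) (Set.Icc 0 T) :=
    fun i j => (hLsmooth i j).continuousOn
  have hC1 : ∀ i j, ContDiffOn ℝ 2 (fun r => matDerivWithin L (Set.Icc 0 T) r i j)
      (Set.Icc 0 T) := fun i j => (hLsmooth i j).derivWithin hsU (by norm_num)
  have hD1 : ∀ i j, ∀ t ∈ Set.Icc (0:ℝ) T, HasDerivWithinAt (fun r => L r i j)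
      (matDerivWithin L (Set.Icc 0 T) t i j) (Set.Icc 0 T) t := fun i j t ht =>
    (((hLsmooth i j).differentiableOn (by norm_num)) t ht).hasDerivWithinAt
  have hD2 : ∀ i j, ∀ t ∈ Set.Icc (0:ℝ) T, HasDerivWithinAt
      (fun r => matDerivWithin L (Set.Icc 0 T) r i j)
      (matDerivWithin (fun r => matDerivWithin L (Set.Icc 0 T) r) (Set.Icc 0 T) t i j)
      (Set.Icc 0 T) t := fun i j t ht =>
    (((hC1 i j).differentiableOn (by norm_num)) t ht).hasDerivWithinAt
  have htay := taylor_aux T hT B L hBcont hLsmooth hL0 hRic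
  have hPhicont : ∀ x : Fin n → ℝ, ContinuousOn (fun t => mink ((L t).mulVec x) x)
      (Set.Icc (0:ℝ) T) := by
    intro x
    refine ContinuousOn.congr (continuousOn_finset_sum _ fun i _ =>
      continuousOn_const.mul (((continuousOn_finset_sum _ fun j _ =>
        (hcL i j).mul continuousOn_const)).mul continuousOn_const))
      fun t _ => mink_mulVec_sum _ _
  -- the compact set of normalized null vectors
  set N : Set (Fin n → ℝ) := {x | x i0 = 1 ∧ mink x x = 0} with hNdef
  have hNne : N.Nonempty := by
    refine ⟨fun j => if (j:ℕ) ≤ 1 then (1:ℝ) else 0, ?_, ?_⟩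
    · simp [hi0]
    · set i1 : Fin n := ⟨1, by omega⟩ with hi1def
      rw [mink_split' i0 hi0]
      have h1 : ∀ j ∈ Finset.univ.erase i0,
          (if ((j:Fin n):ℕ) ≤ 1 then (1:ℝ) else 0) * (if ((j:Fin n):ℕ) ≤ 1 then (1:ℝ) else 0)
          = if j = i1 then (1:ℝ) else 0 := by
        intro j hj
        have hj0 : j ≠ i0 := Finset.ne_of_mem_erase hj
        by_cases h : j = i1
        · subst h; simp [hi1def]
        · have hv0' : (j:ℕ) ≠ 0 := fun hh => hj0 (Fin.ext (hh.trans hi0.symm))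
          have hv1 : (j:ℕ) ≠ 1 := fun hh => h (Fin.ext hh)
          have : ¬ ((j:ℕ) ≤ 1) := by omega
          simp [this, h]
      rw [Finset.sum_congr rfl h1, Finset.sum_ite_eq' (Finset.univ.erase i0) i1 (fun _ => (1:ℝ))]
      have hi1mem : i1 ∈ Finset.univ.erase i0 := by
        refine Finset.mem_erase.2 ⟨?_, Finset.mem_univ _⟩
        intro hh
        have : (1:ℕ) = 0 := by
          have := congrArg (fun z : Fin n => (z:ℕ)) hh
          simpa [hi1def, hi0] using this
        omega
      rw [if_pos hi1mem]
      norm_num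
  have hNbound : ∀ x ∈ N, ∀ i, |x i| ≤ 1 := by
    intro x hx i
    by_cases h : i = i0
    · subst h; rw [hx.1]; norm_num
    · have hnull := hx.2
      rw [mink_split' i0 hi0, hx.1] at hnull
      have hsum : ∑ j ∈ Finset.univ.erase i0, x j * x j = 1 := by linarith
      have hmem : i ∈ Finset.univ.erase i0 := Finset.mem_erase.2 ⟨h, Finset.mem_univ _⟩
      have hle : x i * x i ≤ 1 := by
        rw [← hsum]
        exact Finset.single_le_sum (fun j _ => mul_self_nonneg (x j)) hmem
      rw [abs_le]
      constructor <;> nlinarith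
  have hNcomp : IsCompact N := by
    have h1 : IsClosed {x : Fin n → ℝ | x i0 = 1} :=
      isClosed_eq (continuous_apply i0) continuous_const
    have h2 : IsClosed {x : Fin n → ℝ | mink x x = 0} := by
      refine isClosed_eq ?_ continuous_const
      unfold mink
      refine continuous_finset_sum _ fun j _ => ?_
      split_ifs
      · exact ((continuous_apply j).mul (continuous_apply j)).neg
      · exact (continuous_apply j).mul (continuous_apply j)
    have hclosed : IsClosed N := by
      rw [hNdef, Set.setOf_and]
      exact h1.inter h2
    refine (isCompact_closedBall (0 : Fin n → ℝ) 1).of_isClosed_subset hclosed ?_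
    intro x hx
    rw [Metric.mem_closedBall, dist_zero_right, pi_norm_le_iff_of_nonneg (by norm_num)]
    intro i
    rw [Real.norm_eq_abs]
    exact hNbound x hx i
  -- minimum of the B-form on N
  have hminkBcont : Continuous (fun x : Fin n → ℝ => mink ((B 0).mulVec x) x) := by
    have hfe : (fun x : Fin n → ℝ => mink ((B 0).mulVec x) x)
        = fun x => ∑ i, minkSign i * ((∑ j, B 0 i j * x j) * x i) :=
      funext fun x => mink_mulVec_sum _ _
    rw [hfe]
    exact continuous_finset_sum _ fun i _ => continuous_const.mul
      (((continuous_finset_sum _ fun j _ => continuous_const.mul (continuous_apply j))).mul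
        (continuous_apply i))
  obtain ⟨vm, hvmN, hvm⟩ := hNcomp.exists_isMaxOn hNne hminkBcont.continuousOn
  have hvmne : vm ≠ 0 := by
    intro h
    have := hvmN.1
    rw [h] at this
    simpa using this
  set c₀ : ℝ := -(mink ((B 0).mulVec vm) vm) with hc₀def
  have hc₀pos : 0 < c₀ := by
    have := hBdef 0 h0s vm hvmne hvmN.2
    rw [hc₀def]; linarith
  have hB0le : ∀ x ∈ N, mink ((B 0).mulVec x) x ≤ -c₀ := by
    intro x hx
    have := hvm hx
    rw [hc₀def, neg_neg]
    exact this
  -- entrywise second-order limits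
  have hEntry : ∀ i j, Tendsto (fun t => (L t i j - (1:Matrix (Fin n) (Fin n) ℝ) i j)/t^2)
      (𝓝[>] (0:ℝ)) (𝓝 (-(1/3) * B 0 i j)) := by
    intro i j
    have h := sq_lhopital hT (f := fun t => L t i j - (1:Matrix (Fin n) (Fin n) ℝ) i j)
      (f' := fun t => matDerivWithin L (Set.Icc 0 T) t i j)
      (d := matDerivWithin (fun r => matDerivWithin L (Set.Icc 0 T) r) (Set.Icc 0 T) 0 i j)
      (fun x hx => (hD1 i j x hx).sub_const _)
      (by show L 0 i j - (1:Matrix (Fin n) (Fin n) ℝ) i j = 0; rw [hL0]; ring)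
      (((hLsmooth i j).continuousOn).sub continuousOn_const)
      (by show matDerivWithin L (Set.Icc 0 T) 0 i j = 0; rw [htay.1]; simp)
      (hD2 i j 0 h0s)
    rw [htay.2] at h
    have h2 : ((-(2/3) : ℝ) • B 0) i j / 2 = -(1/3) * B 0 i j := by
      rw [Matrix.smul_apply, smul_eq_mul]; ring
    rw [h2] at h
    exact h
  -- uniform positivity near 0
  set ε : ℝ := c₀ / (3 * ((n:ℝ)^2 + 1)) with hεdef
  have hεpos : 0 < ε := by
    rw [hεdef]
    have : (0:ℝ) < 3 * ((n:ℝ)^2 + 1) := by positivity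
    positivity
  have hevE : ∀ᶠ t in 𝓝[>] (0:ℝ), ∀ i j : Fin n,
      |(L t i j - (1:Matrix (Fin n) (Fin n) ℝ) i j)/t^2 - (-(1/3) * B 0 i j)| < ε := by
    rw [eventually_all]
    intro i
    rw [eventually_all]
    intro j
    have := Metric.tendsto_nhds.1 (hEntry i j) ε hεpos
    simpa [Real.dist_eq] using this
  have hposN : ∀ᶠ t in 𝓝[>] (0:ℝ), ∀ x ∈ N, 0 < mink ((L t).mulVec x) x := by
    filter_upwards [hevE, eventually_mem_nhdsWithin] with t hev ht0
    intro x hxN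
    have htpos : (0:ℝ) < t := ht0
    have htne : t ≠ 0 := ne_of_gt htpos
    have hkey : mink ((L t).mulVec x) x = mink (((L t) - 1).mulVec x) x := by
      rw [mink_sub_one, hxN.2]; ring
    set qM : ℝ := ∑ i, minkSign i *
      ((∑ j, ((L t i j - (1:Matrix (Fin n) (Fin n) ℝ) i j)/t^2) * x j) * x i) with hqM
    have hfact : mink (((L t) - 1).mulVec x) x = t^2 * qM := by
      rw [mink_mulVec_sum, hqM, Finset.mul_sum]
      refine Finset.sum_congr rfl fun i _ => ?_
      have hin : ∑ j, ((L t) - 1) i j * x j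
          = t^2 * ∑ j, ((L t i j - (1:Matrix (Fin n) (Fin n) ℝ) i j)/t^2) * x j := by
        rw [Finset.mul_sum]
        refine Finset.sum_congr rfl fun j _ => ?_
        rw [Matrix.sub_apply]
        field_simp
      rw [hin]; ring
    set qG : ℝ := ∑ i, minkSign i * ((∑ j, (-(1/3) * B 0 i j) * x j) * x i) with hqG
    have hqGval : qG = -(1/3) * mink ((B 0).mulVec x) x := by
      rw [mink_mulVec_sum, hqG, Finset.mul_sum]
      refine Finset.sum_congr rfl fun i _ => ?_
      have hin : ∑ j, (-(1/3) * B 0 i j) * x j = -(1/3) * ∑ j, B 0 i j * x j := by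
        rw [Finset.mul_sum]
        exact Finset.sum_congr rfl fun j _ => by ring
      rw [hin]; ring
    have hqGge : c₀/3 ≤ qG := by
      rw [hqGval]
      have := hB0le x hxN
      linarith
    have hdiffb : |qM - qG| ≤ (n:ℝ) * ((n:ℝ) * ε) := by
      have h1 : qM - qG = ∑ i, minkSign i *
          ((∑ j, ((L t i j - (1:Matrix (Fin n) (Fin n) ℝ) i j)/t^2 - (-(1/3) * B 0 i j)) * x j) * x i) := by
        rw [hqM, hqG, ← Finset.sum_sub_distrib]
        refine Finset.sum_congr rfl fun i _ => ?_
        rw [show (∑ j, ((L t i j - (1:Matrix (Fin n) (Fin n) ℝ) i j)/t^2 - (-(1/3) * B 0 i j)) * x j)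
            = (∑ j, ((L t i j - (1:Matrix (Fin n) (Fin n) ℝ) i j)/t^2) * x j)
              - ∑ j, ((-(1/3) * B 0 i j)) * x j from by
          rw [← Finset.sum_sub_distrib]
          exact Finset.sum_congr rfl fun j _ => by ring]
        ring
      rw [h1]
      calc |∑ i, minkSign i *
          ((∑ j, ((L t i j - (1:Matrix (Fin n) (Fin n) ℝ) i j)/t^2 - (-(1/3) * B 0 i j)) * x j) * x i)|
          ≤ ∑ i, |minkSign i *
          ((∑ j, ((L t i j - (1:Matrix (Fin n) (Fin n) ℝ) i j)/t^2 - (-(1/3) * B 0 i j)) * x j) * x i)| :=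
            Finset.abs_sum_le_sum_abs _ _
        _ ≤ ∑ _i : Fin n, (n:ℝ)*ε := by
            refine Finset.sum_le_sum fun i _ => ?_
            rw [abs_mul, abs_minkSign, one_mul, abs_mul]
            have hSi : |∑ j, ((L t i j - (1:Matrix (Fin n) (Fin n) ℝ) i j)/t^2 - (-(1/3) * B 0 i j)) * x j|
                ≤ (n:ℝ)*ε := by
              calc |∑ j, ((L t i j - (1:Matrix (Fin n) (Fin n) ℝ) i j)/t^2 - (-(1/3) * B 0 i j)) * x j|
                  ≤ ∑ j, |((L t i j - (1:Matrix (Fin n) (Fin n) ℝ) i j)/t^2 - (-(1/3) * B 0 i j)) * x j| :=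
                    Finset.abs_sum_le_sum_abs _ _
                _ ≤ ∑ _j : Fin n, ε := by
                    refine Finset.sum_le_sum fun j _ => ?_
                    rw [abs_mul]
                    calc |(L t i j - (1:Matrix (Fin n) (Fin n) ℝ) i j)/t^2 - (-(1/3) * B 0 i j)| * |x j|
                        ≤ ε * 1 := mul_le_mul (le_of_lt (hev i j)) (hNbound x hxN j)
                          (abs_nonneg _) (le_of_lt hεpos)
                      _ = ε := mul_one ε
                _ = (n:ℝ)*ε := by
                    rw [Finset.sum_const, Finset.card_univ, Fintype.card_fin, nsmul_eq_mul]
            have hxi : |x i| ≤ 1 := hNbound x hxN i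
            calc |∑ j, ((L t i j - (1:Matrix (Fin n) (Fin n) ℝ) i j)/t^2 - (-(1/3) * B 0 i j)) * x j| * |x i|
                ≤ ((n:ℝ)*ε) * 1 := mul_le_mul hSi hxi (abs_nonneg _) (by positivity)
              _ = (n:ℝ)*ε := mul_one _
        _ = (n:ℝ) * ((n:ℝ)*ε) := by
            rw [Finset.sum_const, Finset.card_univ, Fintype.card_fin, nsmul_eq_mul]
    have hne2 : (n:ℝ)*((n:ℝ)*ε) < c₀/3 := by
      have hpos3 : (0:ℝ) < 3 * ((n:ℝ)^2 + 1) := by positivity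
      have hεval : ε * (3 * ((n:ℝ)^2+1)) = c₀ := by
        rw [hεdef]; field_simp
      nlinarith [hεval, hεpos, sq_nonneg (n:ℝ)]
    have h5 : qG - qM ≤ |qM - qG| := by
      rw [abs_sub_comm]
      exact le_abs_self _
    have hqMpos : 0 < qM := by linarith
    rw [hkey, hfact]
    exact mul_pos (by positivity) hqMpos
  obtain ⟨δ, hδ0, hδ⟩ : ∃ δ ∈ Set.Ioi (0:ℝ),
      Set.Ioo 0 δ ⊆ {t | ∀ x ∈ N, 0 < mink ((L t).mulVec x) x} :=
    mem_nhdsGT_iff_exists_Ioo_subset.1 hposN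
  -- main claim on N
  have hMain : ∀ r ∈ Set.Ioc (0:ℝ) T, ∀ x ∈ N, 0 < mink ((L r).mulVec x) x := by
    by_contra hcon
    push_neg at hcon
    obtain ⟨r, hr, x0, hx0N, hx0le⟩ := hcon
    set δ' : ℝ := min δ T with hδ'def
    have hδ'0 : 0 < δ' := lt_min hδ0 hT
    set Φ : ℝ × (Fin n → ℝ) → ℝ := fun p => mink ((L p.1).mulVec p.2) p.2 with hΦdef
    set P : Set (ℝ × (Fin n → ℝ)) := Set.Icc δ' T ×ˢ N with hPdef
    have hPcomp : IsCompact P := isCompact_Icc.prod hNcomp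
    have hΦP : ContinuousOn Φ P := by
      have hfe : ∀ p : ℝ × (Fin n → ℝ), Φ p
          = ∑ i, minkSign i * ((∑ j, L p.1 i j * p.2 j) * p.2 i) :=
        fun p => mink_mulVec_sum _ _
      refine ContinuousOn.congr (continuousOn_finset_sum _ fun i _ => ?_) fun p _ => hfe p
      refine continuousOn_const.mul (ContinuousOn.mul ?_ ?_)
      · refine continuousOn_finset_sum _ fun j _ => ContinuousOn.mul ?_ ?_
        · exact (hcL i j).comp continuous_fst.continuousOn
            (fun p hp => Set.Icc_subset_Icc hδ'0.le le_rfl hp.1)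
        · exact ((continuous_apply j).comp continuous_snd).continuousOn
      · exact ((continuous_apply i).comp continuous_snd).continuousOn
    have hK2closed : IsClosed (P ∩ Φ ⁻¹' (Set.Iic 0)) :=
      hΦP.preimage_isClosed_of_isClosed hPcomp.isClosed isClosed_Iic
    have hK2comp : IsCompact (P ∩ Φ ⁻¹' (Set.Iic 0)) :=
      hPcomp.of_isClosed_subset hK2closed Set.inter_subset_left
    set A : Set ℝ := Prod.fst '' (P ∩ Φ ⁻¹' (Set.Iic 0)) with hAdef
    have hAcomp : IsCompact A := hK2comp.image continuous_fst
    have hrδ' : δ' ≤ r := by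
      by_contra hlt
      push_neg at hlt
      have hrδ : r < δ := lt_of_lt_of_le hlt (min_le_left _ _)
      have := hδ ⟨hr.1, hrδ⟩ x0 hx0N
      linarith
    have hAne : A.Nonempty := ⟨r, ⟨(r, x0), ⟨⟨⟨hrδ', hr.2⟩, hx0N⟩, hx0le⟩, rfl⟩⟩
    have ht₀A : sInf A ∈ A := hAcomp.isClosed.csInf_mem hAne hAcomp.bddBelow
    obtain ⟨⟨t₀', v₀⟩, hK, ht₀eq⟩ := ht₀A
    set t₀ : ℝ := sInf A with ht₀def
    have ht₀' : t₀' = t₀ := ht₀eq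
    rw [ht₀'] at hK
    have hv₀N : v₀ ∈ N := hK.1.2
    have hΦ0le : mink ((L t₀).mulVec v₀) v₀ ≤ 0 := hK.2
    have ht₀mem : t₀ ∈ Set.Icc δ' T := hK.1.1
    have ht₀pos : 0 < t₀ := lt_of_lt_of_le hδ'0 ht₀mem.1
    have ht₀T : t₀ ≤ T := ht₀mem.2
    have ht₀s : t₀ ∈ Set.Icc (0:ℝ) T := ⟨ht₀pos.le, ht₀T⟩
    have hAlb : ∀ y ∈ A, t₀ ≤ y := fun y hy => csInf_le hAcomp.bddBelow hy
    have hpos_before : ∀ z ∈ Set.Ioo (0:ℝ) t₀, ∀ x ∈ N, 0 < mink ((L z).mulVec x) x := by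
      intro z hz x hxN
      by_cases hzδ : z < δ'
      · exact hδ ⟨hz.1, lt_of_lt_of_le hzδ (min_le_left _ _)⟩ x hxN
      · push_neg at hzδ
        by_contra hcon2
        push_neg at hcon2
        have hzA : z ∈ A := ⟨(z, x), ⟨⟨⟨hzδ, le_trans hz.2.le ht₀T⟩, hxN⟩, hcon2⟩, rfl⟩
        have := hAlb z hzA
        linarith [hz.2]
    have hsubIoo : Set.Ioo (0:ℝ) t₀ ⊆ Set.Icc (0:ℝ) T :=
      fun z hz => ⟨hz.1.le, le_trans hz.2.le ht₀T⟩
    have hm : (𝓝[Set.Ioo (0:ℝ) t₀] t₀).NeBot := by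
      refine mem_closure_iff_nhdsWithin_neBot.1 ?_
      rw [closure_Ioo (ne_of_lt ht₀pos)]
      exact ⟨ht₀pos.le, le_refl t₀⟩
    have hgeall : ∀ x ∈ N, 0 ≤ mink ((L t₀).mulVec x) x := by
      intro x hxN
      have hcw : Tendsto (fun z => mink ((L z).mulVec x) x) (𝓝[Set.Ioo (0:ℝ) t₀] t₀)
          (𝓝 (mink ((L t₀).mulVec x) x)) := (hPhicont x t₀ ht₀s).mono hsubIoo
      exact ge_of_tendsto hcw (eventually_of_mem self_mem_nhdsWithin
        fun z hz => (hpos_before z hz x hxN).le)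
    have hF0' : mink ((L t₀).mulVec v₀) v₀ = 0 := le_antisymm hΦ0le (hgeall v₀ hv₀N)
    have hv₀i0 : v₀ i0 = 1 := hv₀N.1
    have hv₀null : mink v₀ v₀ = 0 := hv₀N.2
    have hv₀ne : v₀ ≠ 0 := by
      intro h
      rw [h] at hv₀i0
      simpa using hv₀i0
    -- spatial part of v₀
    set E : Finset (Fin n) := Finset.univ.erase i0 with hEdef
    set Asp : Fin n → ℝ := fun j => if j = i0 then 0 else v₀ j with hAspdef
    have hAspE : ∀ j ∈ E, Asp j = v₀ j := fun j hj => if_neg (Finset.ne_of_mem_erase hj)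
    have hAspi0 : Asp i0 = 0 := if_pos rfl
    have hSA : ∑ j ∈ E, Asp j * Asp j = 1 := by
      have h := hv₀null
      rw [mink_split' i0 hi0, hv₀i0] at h
      have h2 : ∑ j ∈ E, Asp j * Asp j = ∑ j ∈ E, v₀ j * v₀ j :=
        Finset.sum_congr rfl fun j hj => by rw [hAspE j hj]
      rw [h2]
      linarith
    -- first-order condition at the minimizer
    have hperp : ∀ X : Fin n → ℝ, X i0 = 0 → (∑ j ∈ E, Asp j * X j) = 0 →
        (∑ j ∈ E, X j * X j) = 1 → mink ((L t₀).mulVec v₀) X = 0 := by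
      intro X hXi0 hAX hXX
      set y : ℝ → Fin n → ℝ :=
        fun σ j => (if j = i0 then (1:ℝ) else 0) + Asp j * Real.cos σ + X j * Real.sin σ with hydef
      have hy0 : y 0 = v₀ := by
        funext j
        by_cases hj : j = i0
        · subst hj
          simp [hydef, hAspi0, hXi0, hv₀i0]
        · simp [hydef, hj, hAspdef]
      have hyi0 : ∀ σ, y σ i0 = 1 := by
        intro σ
        simp [hydef, hAspi0, hXi0]
      have hyE : ∀ σ, ∀ j ∈ E, y σ j = Asp j * Real.cos σ + X j * Real.sin σ := by
        intro σ j hj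
        have : j ≠ i0 := Finset.ne_of_mem_erase hj
        simp [hydef, this]
      have hynull : ∀ σ, mink (y σ) (y σ) = 0 := by
        intro σ
        rw [mink_split' i0 hi0, hyi0]
        have h1 : ∀ j ∈ E, y σ j * y σ j
            = Real.cos σ^2 * (Asp j * Asp j) + (2*Real.cos σ*Real.sin σ)*(Asp j * X j)
              + Real.sin σ^2 * (X j * X j) := by
          intro j hj
          rw [hyE σ j hj]; ring
        rw [Finset.sum_congr rfl h1, Finset.sum_add_distrib, Finset.sum_add_distrib,
          ← Finset.mul_sum, ← Finset.mul_sum, ← Finset.mul_sum, hSA, hAX, hXX]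
        nlinarith [Real.sin_sq_add_cos_sq σ]
      have hyN : ∀ σ, y σ ∈ N := fun σ => ⟨hyi0 σ, hynull σ⟩
      set ψ : ℝ → ℝ := fun σ => ∑ i, minkSign i * ((∑ j, L t₀ i j * y σ j) * y σ i) with hψdef
      have hψΦ : ∀ σ, ψ σ = mink ((L t₀).mulVec (y σ)) (y σ) :=
        fun σ => (mink_mulVec_sum _ _).symm
      have hψ0 : ψ 0 = 0 := by rw [hψΦ 0, hy0, hF0']
      have hmin : IsLocalMin ψ 0 := by
        refine Filter.Eventually.of_forall fun σ => ?_
        rw [hψ0, hψΦ σ]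
        exact hgeall _ (hyN σ)
      have hyd : ∀ j, HasDerivAt (fun σ => y σ j) (X j) 0 := by
        intro j
        have h1 : HasDerivAt (fun σ => (if j = i0 then (1:ℝ) else 0)
            + Asp j * Real.cos σ + X j * Real.sin σ)
            (0 + Asp j * (-Real.sin 0) + X j * Real.cos 0) 0 :=
          (((hasDerivAt_const 0 _).add ((Real.hasDerivAt_cos 0).const_mul (Asp j))).add
            ((Real.hasDerivAt_sin 0).const_mul (X j)))
        simpa [Real.sin_zero, Real.cos_zero] using h1
      have hψd : HasDerivAt ψ
          (∑ i, minkSign i * ((∑ j, L t₀ i j * X j) * v₀ i + (∑ j, L t₀ i j * v₀ j) * X i)) 0 := by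
        refine HasDerivAt.fun_sum fun i _ => ?_
        have hinner : HasDerivAt (fun σ => ∑ j, L t₀ i j * y σ j) (∑ j, L t₀ i j * X j) 0 :=
          HasDerivAt.fun_sum fun j _ => (hyd j).const_mul (L t₀ i j)
        have hprod := (hinner.mul (hyd i)).const_mul (minkSign i)
        rw [hy0] at hprod
        exact hprod
      have hD0 : (∑ i, minkSign i * ((∑ j, L t₀ i j * X j) * v₀ i
          + (∑ j, L t₀ i j * v₀ j) * X i)) = 0 := by
        have h := hmin.deriv_eq_zero
        rw [hψd.deriv] at h
        exact h
      have hsplit : (∑ i, minkSign i * ((∑ j, L t₀ i j * X j) * v₀ i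
          + (∑ j, L t₀ i j * v₀ j) * X i))
          = mink ((L t₀).mulVec X) v₀ + mink ((L t₀).mulVec v₀) X := by
        rw [mink_mulVec_sum2, mink_mulVec_sum2, ← Finset.sum_add_distrib]
        exact Finset.sum_congr rfl fun i _ => by ring
      have hsymm2 : mink ((L t₀).mulVec X) v₀ = mink ((L t₀).mulVec v₀) X := by
        rw [hLsymm t₀ ht₀s X v₀]
        exact mink_comm _ _
      rw [hsplit, hsymm2] at hD0
      linarith
    -- algebra : L v₀ is proportional to v₀
    set p : Fin n → ℝ := (L t₀).mulVec v₀ with hpdef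
    set α : ℝ := ∑ j ∈ E, p j * Asp j with hαdef
    set ρ : Fin n → ℝ := fun j => if j = i0 then 0 else p j - α * Asp j with hρdef
    have hρE : ∀ j ∈ E, ρ j = p j - α * Asp j :=
      fun j hj => if_neg (Finset.ne_of_mem_erase hj)
    have hρi0 : ρ i0 = 0 := if_pos rfl
    have hAρ : ∑ j ∈ E, Asp j * ρ j = 0 := by
      have h1 : ∑ j ∈ E, Asp j * ρ j
          = ∑ j ∈ E, (p j * Asp j - α * (Asp j * Asp j)) :=
        Finset.sum_congr rfl fun j hj => by rw [hρE j hj]; ring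
      rw [h1, Finset.sum_sub_distrib, ← Finset.mul_sum, hSA, ← hαdef]
      ring
    have hpρ : ∑ j ∈ E, p j * ρ j = ∑ j ∈ E, ρ j * ρ j := by
      have h1 : ∑ j ∈ E, p j * ρ j
          = ∑ j ∈ E, (α * (Asp j * ρ j) + ρ j * ρ j) := by
        refine Finset.sum_congr rfl fun j hj => ?_
        have h2 := hρE j hj
        have h3 : p j = ρ j + α * Asp j := by rw [h2]; ring
        rw [h3]; ring
      rw [h1, Finset.sum_add_distrib, ← Finset.mul_sum, hAρ]
      ring
    have hRnonneg : 0 ≤ ∑ j ∈ E, ρ j * ρ j :=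
      Finset.sum_nonneg fun j _ => mul_self_nonneg _
    have hR0 : ∑ j ∈ E, ρ j * ρ j = 0 := by
      by_contra hRne
      have hRpos : 0 < ∑ j ∈ E, ρ j * ρ j := lt_of_le_of_ne hRnonneg (Ne.symm hRne)
      set R : ℝ := ∑ j ∈ E, ρ j * ρ j with hRdef
      set X : Fin n → ℝ := fun j => ρ j / Real.sqrt R with hXdef
      have hsqrtpos : 0 < Real.sqrt R := Real.sqrt_pos.2 hRpos
      have hXi0 : X i0 = 0 := by rw [hXdef]; simp [hρi0]
      have hAX : ∑ j ∈ E, Asp j * X j = 0 := by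
        have h1 : ∑ j ∈ E, Asp j * X j = (∑ j ∈ E, Asp j * ρ j)/Real.sqrt R := by
          rw [Finset.sum_div]
          exact Finset.sum_congr rfl fun j _ => by rw [hXdef]; ring
        rw [h1, hAρ, zero_div]
      have hXX : ∑ j ∈ E, X j * X j = 1 := by
        have h1 : ∑ j ∈ E, X j * X j = (∑ j ∈ E, ρ j * ρ j)/(Real.sqrt R * Real.sqrt R) := by
          rw [Finset.sum_div]
          refine Finset.sum_congr rfl fun j _ => ?_
          rw [hXdef]
          field_simp
        rw [h1, Real.mul_self_sqrt hRnonneg, ← hRdef]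
        exact div_self (ne_of_gt hRpos)
      have h0 := hperp X hXi0 hAX hXX
      have hval : mink p X = R / Real.sqrt R := by
        rw [mink_split' i0 hi0, hXi0]
        have h1 : ∑ j ∈ E, p j * X j = (∑ j ∈ E, p j * ρ j)/Real.sqrt R := by
          rw [Finset.sum_div]
          exact Finset.sum_congr rfl fun j _ => by rw [hXdef]; ring
        rw [h1, hpρ]
        ring
      rw [hval] at h0
      have : 0 < R / Real.sqrt R := div_pos hRpos hsqrtpos
      linarith
    have hρzero : ∀ j ∈ E, ρ j = 0 := by
      intro j hj
      have := (Finset.sum_eq_zero_iff_of_nonneg (fun i _ => mul_self_nonneg (ρ i))).1 hR0 j hj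
      exact mul_self_eq_zero.1 this
    have hpE : ∀ j ∈ E, p j = α * Asp j := by
      intro j hj
      have h1 := hρzero j hj
      rw [hρE j hj] at h1
      linarith
    have hpi0 : p i0 = α := by
      have h : mink p v₀ = 0 := hF0'
      rw [mink_split' i0 hi0, hv₀i0] at h
      have h2 : ∑ j ∈ E, p j * v₀ j = α := by
        rw [hαdef]
        exact Finset.sum_congr rfl fun j hj => by rw [hAspE j hj]
      rw [h2] at h
      linarith
    have hpp : mink p p = 0 := by
      rw [mink_split' i0 hi0, hpi0]
      have h1 : ∑ j ∈ E, p j * p j = α^2 * (∑ j ∈ E, Asp j * Asp j) := by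
        rw [Finset.mul_sum]
        exact Finset.sum_congr rfl fun j hj => by rw [hpE j hj]; ring
      rw [h1, hSA]
      ring
    have hQ0 : mink ((L t₀).mulVec ((L t₀).mulVec v₀)) v₀ ≤ 0 := by
      have hsymm3 : mink ((L t₀).mulVec ((L t₀).mulVec v₀)) v₀
          = mink ((L t₀).mulVec v₀) ((L t₀).mulVec v₀) :=
        hLsymm t₀ ht₀s ((L t₀).mulVec v₀) v₀
      rw [hsymm3]
      have he : mink ((L t₀).mulVec v₀) ((L t₀).mulVec v₀) = mink p p := rfl
      rw [he, hpp]
    have hb : mink ((B t₀).mulVec v₀) v₀ < 0 := hBdef t₀ ht₀s v₀ hv₀ne hv₀null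
    exact barrier_aux T hT B L hLsmooth hRic v₀ t₀ ⟨ht₀pos, ht₀T⟩ hF0' hQ0 hb
      (fun z hz => (hpos_before z hz v₀ hv₀N).le)
  -- scaling down to general null vectors
  have ha : v i0 ≠ 0 := null_i0_ne i0 hi0 hv0 hvnull
  have hcne : (v i0)⁻¹ ≠ 0 := inv_ne_zero ha
  have hv'N : ((v i0)⁻¹ • v) ∈ N := by
    constructor
    · simp only [Pi.smul_apply, smul_eq_mul]
      exact inv_mul_cancel₀ ha
    · rw [mink_smul_smul]
      rw [show mink v v = 0 from hvnull]
      ring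
  have hpos := hMain t₁ ht₁ ((v i0)⁻¹ • v) hv'N
  have hsc : mink ((L t₁).mulVec ((v i0)⁻¹ • v)) ((v i0)⁻¹ • v)
      = ((v i0)⁻¹)^2 * mink ((L t₁).mulVec v) v := by
    rw [Matrix.mulVec_smul, mink_smul_smul]
  rw [hsc] at hpos
  have hc2 : 0 < ((v i0)⁻¹)^2 := by positivity
  by_contra hfin
  push_neg at hfin
  nlinarith [hpos, hc2, hfin]
end
end

section
/- Let n ≥ 2, T > 0 and t₀ ∈ (0,T]. Let B : [0,T] → ℝ^{n×n} and let L : [0,T] → ℝ^{n×n} be differentiable at t₀ with each L(t) Minkowski-symmetric, and suppose the Riccati equation t₀ L′(t₀) + L(t₀)² − L(t₀) + t₀² B(t₀) = 0 holds. Suppose x₀ ∈ ℝⁿ is a nonzero null vector with L(t₀) x₀ = λ x₀ for some λ ∈ ℝ. Define f(t) = −⟨L(t) x₀, x₀⟩. Then t₀ f′(t₀) = t₀² ⟨B(t₀) x₀, x₀⟩; in particular, if B(t₀) is null negative-definite then f′(t₀) < 0. -/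
open Matrix Set

noncomputable section

lemma mink_add_left {n : ℕ} (u v w : Fin n → ℝ) :
    mink (u + v) w = mink u w + mink v w := by
  unfold mink
  rw [← Finset.sum_add_distrib]
  refine Finset.sum_congr rfl fun j _ => ?_
  split <;> simp <;> ring

lemma mink_smul_left {n : ℕ} (a : ℝ) (v w : Fin n → ℝ) :
    mink (a • v) w = a * mink v w := by
  unfold mink
  rw [Finset.mul_sum]
  refine Finset.sum_congr rfl fun j _ => ?_
  split <;> simp <;> ring

lemma mink_sub_left {n : ℕ} (u v w : Fin n → ℝ) :
    mink (u - v) w = mink u w - mink v w := by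
  have := mink_add_left (u - v) v w
  simp at this; linarith

/-- along a nonzero null eigenvector `x₀` of `L(t₀)`, the Riccati
equation forces `t₀ f'(t₀) = t₀² ⟨B(t₀)x₀,x₀⟩` for `f(t) = -⟨L(t)x₀,x₀⟩`; in
particular `f'(t₀) < 0` when `B(t₀)` is null negative-definite. -/
theorem stmt_7 {n : ℕ} (hn : 2 ≤ n) (T : ℝ) (hT : 0 < T)
    (t₀ : ℝ) (ht₀ : t₀ ∈ Set.Ioc 0 T)
    (B L : ℝ → Matrix (Fin n) (Fin n) ℝ)
    (L' : Matrix (Fin n) (Fin n) ℝ)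
    (hL' : ∀ i j, HasDerivAt (fun t => L t i j) (L' i j) t₀)
    (hsymm : ∀ t ∈ Set.Icc (0 : ℝ) T, MinkSymm (L t))
    (hRic : t₀ • L' + L t₀ * L t₀ - L t₀ + t₀ ^ 2 • B t₀ = 0)
    (x₀ : Fin n → ℝ) (hx₀ : x₀ ≠ 0) (hnull : IsNull x₀)
    (lam : ℝ) (heig : (L t₀).mulVec x₀ = lam • x₀) :
    t₀ * deriv (fun t => -mink ((L t).mulVec x₀) x₀) t₀
        = t₀ ^ 2 * mink ((B t₀).mulVec x₀) x₀
      ∧ (NullNegDef (B t₀) → deriv (fun t => -mink ((L t).mulVec x₀) x₀) t₀ < 0) := by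
  obtain ⟨ht0, hle⟩ := ht₀
  -- derivative computation
  have hder : HasDerivAt (fun t => mink ((L t).mulVec x₀) x₀)
      (mink (L'.mulVec x₀) x₀) t₀ := by
    have hrw : ∀ M : Matrix (Fin n) (Fin n) ℝ, mink (M.mulVec x₀) x₀ =
        ∑ j : Fin n, (if (j : ℕ) = 0 then -((∑ i, M j i * x₀ i) * x₀ j)
          else (∑ i, M j i * x₀ i) * x₀ j) := by
      intro M
      unfold mink
      refine Finset.sum_congr rfl fun j _ => ?_
      simp [Matrix.mulVec, dotProduct]
    simp only [hrw]
    apply HasDerivAt.fun_sum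
    intro j _
    by_cases hj : (j : ℕ) = 0
    · simp only [if_pos hj]
      exact ((HasDerivAt.fun_sum (fun i _ => (hL' j i).mul_const (x₀ i))).mul_const (x₀ j)).neg
    · simp only [if_neg hj]
      exact (HasDerivAt.fun_sum (fun i _ => (hL' j i).mul_const (x₀ i))).mul_const (x₀ j)
  have hderiv : deriv (fun t => -mink ((L t).mulVec x₀) x₀) t₀
      = -mink (L'.mulVec x₀) x₀ := hder.neg.deriv
  -- Riccati applied to x₀
  have hvec : t₀ • (L'.mulVec x₀) + (lam * lam) • x₀ - lam • x₀
      + t₀ ^ 2 • ((B t₀).mulVec x₀) = 0 := by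
    have := congrArg (fun M => M.mulVec x₀) hRic
    simpa [Matrix.add_mulVec, Matrix.sub_mulVec, Matrix.smul_mulVec,
      ← Matrix.mulVec_mulVec, heig, Matrix.mulVec_smul, smul_smul] using this
  have hkey : t₀ * mink (L'.mulVec x₀) x₀ + t₀ ^ 2 * mink ((B t₀).mulVec x₀) x₀ = 0 := by
    have h0 := congrArg (fun v => mink v x₀) hvec
    have hz : mink (0 : Fin n → ℝ) x₀ = 0 := by simp [mink]
    simp only [mink_add_left, mink_sub_left, mink_smul_left, hz] at h0
    have hx : mink x₀ x₀ = 0 := hnull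
    rw [hx] at h0
    linarith
  constructor
  · rw [hderiv]; linarith
  · intro hB
    rw [hderiv]
    have hBneg := hB x₀ hx₀ hnull
    have hfac : t₀ * (mink (L'.mulVec x₀) x₀ + t₀ * mink ((B t₀).mulVec x₀) x₀) = 0 := by
      ring_nf; ring_nf at hkey; linarith
    have hsum : mink (L'.mulVec x₀) x₀ + t₀ * mink ((B t₀).mulVec x₀) x₀ = 0 :=
      (mul_eq_zero.mp hfac).resolve_left (ne_of_gt ht0)
    have : -mink (L'.mulVec x₀) x₀ = t₀ * mink ((B t₀).mulVec x₀) x₀ := by linarith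
    rw [this]
    exact mul_neg_of_pos_of_neg ht0 hBneg
end
end
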